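/- If P and Q are n×n positive definite real matrices with P > Q (i.e., P − Q positive definite), then ‖P − Q‖ ≤ (e^{δ(P,Q)} − 1)·‖Q‖. -/

import Mathlib

open Matrix

noncomputable def singVals {n : ℕ} (M : Matrix (Fin n) (Fin n) ℝ) (i : Fin n) : ℝ :=
  Real.sqrt ((Matrix.isHermitian_conjTranspose_mul_self M).eigenvalues i)

noncomputable def rdist {n : ℕ} (P Q : Matrix (Fin n) (Fin n) ℝ) : ℝ :=
  Real.sqrt (∑ i, (Real.log (singVals (P * Q⁻¹) i)) ^ 2)

noncomputable def matSpectralNorm {m n : ℕ} (M : Matrix (Fin m) (Fin n) ℝ) : ℝ :=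
  ‖(LinearMap.toContinuousLinearMap (Matrix.toEuclideanLin M))‖

section Aux

open scoped Matrix.Norms.L2Operator

lemma spectralNorm_eq_l2norm {n : ℕ} (M : Matrix (Fin n) (Fin n) ℝ) : matSpectralNorm M = ‖M‖ := rfl

lemma norm_diagonal_le {n : ℕ} (v : Fin n → ℝ) {c : ℝ} (hc : 0 ≤ c) (h : ∀ i, |v i| ≤ c) :
    ‖(Matrix.diagonal v : Matrix (Fin n) (Fin n) ℝ)‖ ≤ c := by
  rw [Matrix.l2_opNorm_def]
  refine ContinuousLinearMap.opNorm_le_bound _ hc fun x => ?_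
  set y := (LinearEquiv.trans (Matrix.toEuclideanLin) LinearMap.toContinuousLinearMap
      (Matrix.diagonal v)) x with hy
  have hx : ∀ i, y i = v i * x i := by
    intro i
    rw [hy]
    simp only [LinearEquiv.trans_apply, LinearMap.coe_toContinuousLinearMap',
      Matrix.toEuclideanLin_apply, Matrix.mulVec_diagonal, PiLp.toLp_apply]
  rw [EuclideanSpace.norm_eq, EuclideanSpace.norm_eq]
  have h1 : ∀ i : Fin n, ‖y i‖ ^ 2 ≤ c ^ 2 * ‖x i‖ ^ 2 := by
    intro i
    rw [hx i]
    have h2 : |v i * x i| ≤ c * |x i| := by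
      rw [abs_mul]
      exact mul_le_mul_of_nonneg_right (h i) (abs_nonneg _)
    have e1 : ‖v i * x i‖ = |v i * x i| := rfl
    have e2 : ‖x i‖ = |x i| := rfl
    rw [e1, e2]
    nlinarith [abs_nonneg (v i * x i), abs_nonneg (x i)]
  calc Real.sqrt (∑ i, ‖y i‖ ^ 2)
      ≤ Real.sqrt (∑ i, c ^ 2 * ‖x i‖ ^ 2) := Real.sqrt_le_sqrt (Finset.sum_le_sum fun i _ => h1 i)
    _ = c * Real.sqrt (∑ i, ‖x i‖ ^ 2) := by
        rw [← Finset.mul_sum, Real.sqrt_mul (sq_nonneg c), Real.sqrt_sq hc]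

lemma norm_hermitian_le {n : ℕ} {M : Matrix (Fin n) (Fin n) ℝ} (hM : M.IsHermitian) {c : ℝ}
    (hc : 0 ≤ c) (h : ∀ i, |hM.eigenvalues i| ≤ c) : ‖M‖ ≤ c := by
  conv_lhs => rw [hM.spectral_theorem]
  rw [Unitary.conjStarAlgAut_apply]
  rw [CStarRing.norm_mul_mem_unitary _ (Unitary.star_mem hM.eigenvectorUnitary.2),
    CStarRing.norm_mem_unitary_mul _ hM.eigenvectorUnitary.2]
  have hco : (RCLike.ofReal ∘ hM.eigenvalues : Fin n → ℝ) = hM.eigenvalues := by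
    funext i; simp
  rw [hco]
  exact norm_diagonal_le _ hc h

lemma le_of_pow_two_pow_le {a b C : ℝ} (hb : 0 ≤ b)
    (h : ∀ m : ℕ, a ^ (2 ^ m) ≤ C * b ^ (2 ^ m)) : a ≤ b := by
  by_contra hab
  push_neg at hab
  have ha0 : 0 < a := lt_of_le_of_lt hb hab
  rcases eq_or_lt_of_le hb with hb0 | hb0
  · have h0 := h 0
    rw [pow_zero, pow_one, pow_one, ← hb0, mul_zero] at h0
    linarith
  · set r : ℝ := b / a with hr
    have hr0 : 0 ≤ r := div_nonneg hb ha0.le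
    have hr1 : r < 1 := (div_lt_one ha0).mpr hab
    have key : ∀ m : ℕ, (1 : ℝ) ≤ C * r ^ (2 ^ m) := by
      intro m
      have hm := h m
      have hpos : 0 < a ^ (2 ^ m) := pow_pos ha0 _
      rw [hr, div_pow, ← mul_div_assoc, le_div_iff₀ hpos, one_mul]
      linarith
    have h2 : Filter.Tendsto (fun m : ℕ => C * r ^ (2 ^ m)) Filter.atTop (nhds (C * 0)) := by
      exact ((tendsto_pow_atTop_nhds_zero_of_lt_one hr0 hr1).comp
        (tendsto_pow_atTop_atTop_of_one_lt (by norm_num))).const_mul C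
    have hge := ge_of_tendsto' h2 key
    simp at hge
    linarith

lemma posdef_conj {n : ℕ} {A B : Matrix (Fin n) (Fin n) ℝ} (hA : A.PosDef) (hB : IsUnit B) :
    (Bᴴ * A * B).PosDef := by
  have hinj := Matrix.mulVec_injective_iff_isUnit.mpr hB
  exact hA.conjTranspose_mul_mul_same hinj

lemma eig_le_norm {n : ℕ} {S T : Matrix (Fin n) (Fin n) ℝ} (hT : T.IsHermitian)
    (hST : S = T + 1) (j : Fin n) : |hT.eigenvalues j + 1| ≤ ‖S‖ := by
  set v := hT.eigenvectorBasis j with hv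
  have hnv : ‖v‖ = 1 := hT.eigenvectorBasis.orthonormal.1 j
  have hmul : S *ᵥ ⇑v = (hT.eigenvalues j + 1) • ⇑v := by
    rw [hST, Matrix.add_mulVec, Matrix.one_mulVec, hT.mulVec_eigenvectorBasis j]
    funext i; simp [add_smul]; ring
  have hle := Matrix.l2_opNorm_mulVec S v
  have e1 : ((EuclideanSpace.equiv (Fin n) ℝ).symm (S *ᵥ v) : EuclideanSpace ℝ (Fin n))
      = (hT.eigenvalues j + 1) • v := by
    refine PiLp.ext fun i => ?_
    have := congrFun hmul i
    simpa using this
  rw [e1, norm_smul, hnv] at hle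
  simpa using hle

section MatSqrt
open scoped MatrixOrder

noncomputable def matSqrtAux {n : ℕ} (Q : Matrix (Fin n) (Fin n) ℝ) : Matrix (Fin n) (Fin n) ℝ :=
  CFC.sqrt Q

lemma matSqrtAux_posSemidef {n : ℕ} (Q : Matrix (Fin n) (Fin n) ℝ) : (matSqrtAux Q).PosSemidef :=
  Matrix.nonneg_iff_posSemidef.mp (CFC.sqrt_nonneg Q)

lemma matSqrtAux_mul_self {n : ℕ} {Q : Matrix (Fin n) (Fin n) ℝ} (hQ : Q.PosSemidef) :
    matSqrtAux Q * matSqrtAux Q = Q :=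
  CFC.sqrt_mul_sqrt_self Q (Matrix.nonneg_iff_posSemidef.mpr hQ)

end MatSqrt

end Aux

open scoped Matrix.Norms.L2Operator in
/-- If P > Q (i.e. P − Q positive definite), then
    ‖P − Q‖ ≤ (e^{δ(P,Q)} − 1)·‖Q‖. -/
theorem norm_sub_le_of_rdist {n : ℕ} (P Q : Matrix (Fin n) (Fin n) ℝ)
    (hP : P.PosDef) (hQ : Q.PosDef) (hPQ : (P - Q).PosDef) :
    matSpectralNorm (P - Q) ≤ (Real.exp (rdist P Q) - 1) * matSpectralNorm Q := by
  rcases Nat.eq_zero_or_pos n with rfl | hn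
  · have h0 : P - Q = 0 := Subsingleton.elim _ _
    rw [spectralNorm_eq_l2norm, spectralNorm_eq_l2norm, h0, norm_zero]
    have h1 : (1 : ℝ) ≤ Real.exp (rdist P Q) := by
      rw [show (1:ℝ) = Real.exp 0 by simp]
      exact Real.exp_le_exp.mpr (Real.sqrt_nonneg _)
    exact mul_nonneg (by linarith) (norm_nonneg _)
  haveI : Nonempty (Fin n) := ⟨⟨0, hn⟩⟩
  rw [spectralNorm_eq_l2norm, spectralNorm_eq_l2norm]
  set R := matSqrtAux Q with hRdef
  have hR : R.PosSemidef := matSqrtAux_posSemidef Q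
  have hRR : R * R = Q := matSqrtAux_mul_self hQ.posSemidef
  have hRdet : IsUnit R.det := by
    have hd : R.det * R.det = Q.det := by rw [← Matrix.det_mul, hRR]
    have hQdet := hQ.det_pos
    have hne : R.det ≠ 0 := by intro h; rw [h, mul_zero] at hd; linarith
    exact hne.isUnit
  have hRiR : R⁻¹ * R = 1 := Matrix.nonsing_inv_mul R hRdet
  have hRRi : R * R⁻¹ = 1 := Matrix.mul_nonsing_inv R hRdet
  have hRiH : R⁻¹ᴴ = R⁻¹ := hR.1.inv
  have hRiUnit : IsUnit R⁻¹ :=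
    Matrix.isUnit_nonsing_inv_iff.mpr ((Matrix.isUnit_iff_isUnit_det R).mpr hRdet)
  set S := R⁻¹ * P * R⁻¹ with hSdef
  have hS : S.PosDef := by
    have := posdef_conj hP hRiUnit
    rwa [hRiH] at this
  have hQii : Q⁻¹ = R⁻¹ * R⁻¹ := by rw [← hRR, Matrix.mul_inv_rev]
  set A := P * Q⁻¹ with hAdef
  have hSA : S = R⁻¹ * A * R := by
    rw [hAdef, hQii, hSdef]
    simp only [Matrix.mul_assoc, hRiR, Matrix.mul_one]
  have hQ1 : R⁻¹ * Q * R⁻¹ = 1 := by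
    rw [← hRR]
    simp only [Matrix.mul_assoc, hRRi, Matrix.mul_one, hRiR]
  have hTposdef : (S - 1).PosDef := by
    have hcon := posdef_conj hPQ hRiUnit
    rw [hRiH] at hcon
    have hexp : R⁻¹ * (P - Q) * R⁻¹ = S - R⁻¹ * Q * R⁻¹ := by
      rw [hSdef]; noncomm_ring
    rwa [hexp, hQ1] at hcon
  have hPQeq : P - Q = R * (S - 1) * R := by
    have hexp : R⁻¹ * (P - Q) * R⁻¹ = S - 1 := by
      have hx2 : R⁻¹ * (P - Q) * R⁻¹ = S - R⁻¹ * Q * R⁻¹ := by rw [hSdef]; noncomm_ring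
      rw [hx2, hQ1]
    calc P - Q = R * (R⁻¹ * (P - Q) * R⁻¹) * R := by
          simp only [← Matrix.mul_assoc, hRRi, Matrix.one_mul]
          rw [Matrix.mul_assoc, hRiR, Matrix.mul_one]
      _ = R * (S - 1) * R := by rw [hexp]
  have hnR : ‖R‖ * ‖R‖ = ‖Q‖ := by
    have hstar : star R * R = Q := by rw [Matrix.star_eq_conjTranspose, hR.1, hRR]
    rw [← CStarRing.norm_star_mul_self, hstar]
  have hnorm1 : ‖P - Q‖ ≤ ‖S - 1‖ * ‖Q‖ := by
    rw [hPQeq]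
    calc ‖R * (S - 1) * R‖ ≤ ‖R * (S - 1)‖ * ‖R‖ := Matrix.l2_opNorm_mul _ _
      _ ≤ ‖R‖ * ‖S - 1‖ * ‖R‖ :=
          mul_le_mul_of_nonneg_right (Matrix.l2_opNorm_mul _ _) (norm_nonneg _)
      _ = ‖S - 1‖ * (‖R‖ * ‖R‖) := by ring
      _ = ‖S - 1‖ * ‖Q‖ := by rw [hnR]
  -- ‖S‖ ≤ ‖A‖
  have hcanc : ∀ X : Matrix (Fin n) (Fin n) ℝ, R * (R⁻¹ * X) = X := fun X => by
    rw [← Matrix.mul_assoc, hRRi, Matrix.one_mul]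
  have hSpow : ∀ k : ℕ, S ^ (k + 1) = R⁻¹ * A ^ (k + 1) * R := by
    intro k; induction k with
    | zero => simpa [pow_one] using hSA
    | succ k ih =>
        rw [pow_succ, ih, hSA]
        simp only [pow_succ, Matrix.mul_assoc, hcanc]
  have hSelf : _root_.IsSelfAdjoint S := by
    show star S = S
    rw [Matrix.star_eq_conjTranspose]
    exact hS.1
  have hSok : ∀ m : ℕ, ‖S‖ ^ (2 ^ m) ≤ (‖R⁻¹‖ * ‖R‖) * ‖A‖ ^ (2 ^ m) := by
    intro m
    have h1 : ‖S ^ (2 ^ m)‖ = ‖S‖ ^ (2 ^ m) := by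
      have hq := hSelf.nnnorm_pow_two_pow m
      have hq2 := congrArg (fun x : NNReal => (x : ℝ)) hq
      simpa using hq2
    have h2m : 0 < 2 ^ m := pow_pos (by norm_num) m
    obtain ⟨k, hk⟩ : ∃ k, 2 ^ m = k + 1 := ⟨2 ^ m - 1, by omega⟩
    have hApow : ‖A ^ (2 ^ m)‖ ≤ ‖A‖ ^ (2 ^ m) := norm_pow_le' A h2m
    calc ‖S‖ ^ (2 ^ m) = ‖S ^ (2 ^ m)‖ := h1.symm
      _ = ‖R⁻¹ * A ^ (2 ^ m) * R‖ := by rw [hk, hSpow k, ← hk]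
      _ ≤ ‖R⁻¹ * A ^ (2 ^ m)‖ * ‖R‖ := Matrix.l2_opNorm_mul _ _
      _ ≤ (‖R⁻¹‖ * ‖A ^ (2 ^ m)‖) * ‖R‖ :=
          mul_le_mul_of_nonneg_right (Matrix.l2_opNorm_mul _ _) (norm_nonneg _)
      _ ≤ (‖R⁻¹‖ * ‖A‖ ^ (2 ^ m)) * ‖R‖ :=
          mul_le_mul_of_nonneg_right
            (mul_le_mul_of_nonneg_left hApow (norm_nonneg _)) (norm_nonneg _)
      _ = (‖R⁻¹‖ * ‖R‖) * ‖A‖ ^ (2 ^ m) := by ring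
  have hSleA : ‖S‖ ≤ ‖A‖ := le_of_pow_two_pow_le (norm_nonneg A) hSok
  -- ‖S - 1‖ ≤ ‖S‖ - 1
  have hTh : (S - 1).IsHermitian := hTposdef.1
  obtain ⟨j, -, hj⟩ := Finset.exists_max_image Finset.univ hTh.eigenvalues
    ⟨Classical.arbitrary _, Finset.mem_univ _⟩
  have hTnorm : ‖S - 1‖ ≤ hTh.eigenvalues j :=
    norm_hermitian_le hTh (hTposdef.eigenvalues_pos j).le
      (fun i => by rw [abs_of_pos (hTposdef.eigenvalues_pos i)]; exact hj i (Finset.mem_univ i))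
  have hTS : hTh.eigenvalues j + 1 ≤ ‖S‖ := by
    have h := eig_le_norm (S := S) hTh (by abel) j
    rwa [abs_of_pos (by linarith [hTposdef.eigenvalues_pos j])] at h
  have hST1 : ‖S - 1‖ ≤ ‖S‖ - 1 := by linarith
  -- ‖A‖ ≤ exp (rdist P Q)
  have hAunit : IsUnit A := hP.isUnit.mul hQ.inv.isUnit
  have hAne : A ≠ 0 := hAunit.ne_zero
  have hApos : 0 < ‖A‖ := norm_pos_iff.mpr hAne
  have hherm := Matrix.isHermitian_conjTranspose_mul_self A
  obtain ⟨j2, -, hj2⟩ := Finset.exists_max_image Finset.univ hherm.eigenvalues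
    ⟨Classical.arbitrary _, Finset.mem_univ _⟩
  have hpsd : (Aᵀ * A).PosSemidef := by
    rw [← Matrix.conjTranspose_eq_transpose_of_trivial]
    exact Matrix.posSemidef_conjTranspose_mul_self A
  have hev_nonneg : ∀ i, 0 ≤ hherm.eigenvalues i := fun i => hpsd.eigenvalues_nonneg i
  have hAA : ‖A‖ * ‖A‖ = ‖Aᵀ * A‖ := by
    rw [← Matrix.l2_opNorm_conjTranspose_mul_self A, Matrix.conjTranspose_eq_transpose_of_trivial]
  have hnormAA : ‖Aᵀ * A‖ ≤ hherm.eigenvalues j2 :=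
    norm_hermitian_le hherm (hev_nonneg j2)
      (fun i => by rw [abs_of_nonneg (hev_nonneg i)]; exact hj2 i (Finset.mem_univ i))
  have hArel : ‖A‖ ≤ singVals A j2 := by
    rw [singVals]
    have hsq : ‖A‖ ^ 2 ≤ (Matrix.isHermitian_conjTranspose_mul_self A).eigenvalues j2 := by
      rw [sq]
      exact le_trans (le_of_eq hAA) hnormAA
    exact (Real.le_sqrt (norm_nonneg A) (hev_nonneg j2)).mpr hsq
  have hsingpos : 0 < singVals A j2 := lt_of_lt_of_le hApos hArel
  have hlog : Real.log (singVals A j2) ≤ rdist P Q := by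
    rw [rdist, ← hAdef]
    calc Real.log (singVals A j2) ≤ |Real.log (singVals A j2)| := le_abs_self _
      _ = Real.sqrt ((Real.log (singVals A j2)) ^ 2) := (Real.sqrt_sq_eq_abs _).symm
      _ ≤ Real.sqrt (∑ i, (Real.log (singVals A i)) ^ 2) :=
          Real.sqrt_le_sqrt (Finset.single_le_sum
            (f := fun i => (Real.log (singVals A i)) ^ 2)
            (fun i _ => sq_nonneg _) (Finset.mem_univ j2))
  have hAexp : ‖A‖ ≤ Real.exp (rdist P Q) := by
    calc ‖A‖ ≤ singVals A j2 := hArel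
      _ = Real.exp (Real.log (singVals A j2)) := (Real.exp_log hsingpos).symm
      _ ≤ Real.exp (rdist P Q) := Real.exp_le_exp.mpr hlog
  calc ‖P - Q‖ ≤ ‖S - 1‖ * ‖Q‖ := hnorm1
    _ ≤ (Real.exp (rdist P Q) - 1) * ‖Q‖ :=
        mul_le_mul_of_nonneg_right (by linarith) (norm_nonneg _)
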